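/- (Gumbel-max trick) Let s ∈ ℝ^N and let v₁,…,v_N be i.i.d. standard Gumbel random variables (CDF t ↦ exp(−exp(−t))). Then for each index j, P(argmax_n (s_n + v_n) = j) = exp(s_j) / Σ_m exp(s_m), i.e., the argmax of Gumbel-perturbed scores is distributed according to the softmax of s. -/

import Mathlib

open MeasureTheory ProbabilityTheory Real Finset

/-- Transform mapping uniform(0,1) to standard Gumbel. -/
noncomputable def gumbelT : ℝ → ℝ := fun u => -Real.log (-Real.log u)

lemma gumbelT_measurable : Measurable gumbelT :=
  (Real.measurable_log.comp Real.measurable_log.neg).neg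

/-- The standard Gumbel measure. -/
noncomputable def gumbel : Measure ℝ :=
  Measure.map gumbelT (volume.restrict (Set.Ioo (0:ℝ) 1))

lemma gumbelT_le_iff {u a : ℝ} (hu : u ∈ Set.Ioo (0:ℝ) 1) :
    gumbelT u ≤ a ↔ u ≤ Real.exp (-Real.exp (-a)) := by
  have hlu : Real.log u < 0 := Real.log_neg hu.1 hu.2
  rw [gumbelT, neg_le, Real.le_log_iff_exp_le (by linarith), le_neg,
    ← Real.log_le_iff_le_exp hu.1]

lemma gumbelT_lt_iff {u a : ℝ} (hu : u ∈ Set.Ioo (0:ℝ) 1) :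
    gumbelT u < a ↔ u < Real.exp (-Real.exp (-a)) := by
  have hlu : Real.log u < 0 := Real.log_neg hu.1 hu.2
  rw [gumbelT, neg_lt, Real.lt_log_iff_exp_lt (by linarith), lt_neg,
    ← Real.log_lt_iff_lt_exp hu.1]

lemma exp_neg_gumbelT {u : ℝ} (hu : u ∈ Set.Ioo (0:ℝ) 1) :
    Real.exp (-gumbelT u) = -Real.log u := by
  have hlu : Real.log u < 0 := Real.log_neg hu.1 hu.2
  rw [gumbelT, neg_neg, Real.exp_log (by linarith)]

lemma gumbel_Iic (a : ℝ) : gumbel (Set.Iic a) = ENNReal.ofReal (Real.exp (-Real.exp (-a))) := by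
  rw [gumbel, Measure.map_apply gumbelT_measurable measurableSet_Iic,
    Measure.restrict_apply' measurableSet_Ioo]
  have hm0 : 0 < Real.exp (-Real.exp (-a)) := Real.exp_pos _
  have hm1 : Real.exp (-Real.exp (-a)) < 1 := by
    rw [Real.exp_lt_one_iff]
    exact neg_neg_iff_pos.mpr (Real.exp_pos _)
  have : gumbelT ⁻¹' Set.Iic a ∩ Set.Ioo 0 1 = Set.Ioc 0 (Real.exp (-Real.exp (-a))) := by
    ext u
    simp only [Set.mem_inter_iff, Set.mem_preimage, Set.mem_Iic, Set.mem_Ioo, Set.mem_Ioc]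
    constructor
    · rintro ⟨h1, h2⟩
      exact ⟨h2.1, (gumbelT_le_iff h2).mp h1⟩
    · rintro ⟨h1, h2⟩
      have hu : u ∈ Set.Ioo (0:ℝ) 1 := ⟨h1, lt_of_le_of_lt h2 hm1⟩
      exact ⟨(gumbelT_le_iff hu).mpr h2, hu⟩
  rw [this, Real.volume_Ioc, sub_zero]

lemma gumbel_Iio (a : ℝ) : gumbel (Set.Iio a) = ENNReal.ofReal (Real.exp (-Real.exp (-a))) := by
  rw [gumbel, Measure.map_apply gumbelT_measurable measurableSet_Iio,
    Measure.restrict_apply' measurableSet_Ioo]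
  have hm0 : 0 < Real.exp (-Real.exp (-a)) := Real.exp_pos _
  have hm1 : Real.exp (-Real.exp (-a)) < 1 := by
    rw [Real.exp_lt_one_iff]
    exact neg_neg_iff_pos.mpr (Real.exp_pos _)
  have : gumbelT ⁻¹' Set.Iio a ∩ Set.Ioo 0 1 = Set.Ioo 0 (Real.exp (-Real.exp (-a))) := by
    ext u
    simp only [Set.mem_inter_iff, Set.mem_preimage, Set.mem_Iio, Set.mem_Ioo]
    constructor
    · rintro ⟨h1, h2⟩
      exact ⟨h2.1, (gumbelT_lt_iff h2).mp h1⟩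
    · rintro ⟨h1, h2⟩
      have hu : u ∈ Set.Ioo (0:ℝ) 1 := ⟨h1, lt_trans h2 hm1⟩
      exact ⟨(gumbelT_lt_iff hu).mpr h2, hu⟩
  rw [this, Real.volume_Ioo, sub_zero]

instance gumbel_isProbabilityMeasure : IsProbabilityMeasure gumbel := by
  constructor
  rw [gumbel, Measure.map_apply gumbelT_measurable MeasurableSet.univ, Set.preimage_univ,
    Measure.restrict_apply_univ, Real.volume_Ioo]
  norm_num

/-- The key integral computation. -/
lemma gumbel_integral {c : ℝ} (hc : 0 ≤ c) :
    ∫⁻ t, ENNReal.ofReal (Real.exp (-(c * Real.exp (-t)))) ∂gumbel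
      = ENNReal.ofReal (1 / (c + 1)) := by
  have hmg : Measurable fun t : ℝ => ENNReal.ofReal (Real.exp (-(c * Real.exp (-t)))) := by
    fun_prop
  rw [gumbel, lintegral_map hmg gumbelT_measurable]
  have hcong : ∀ u ∈ Set.Ioo (0:ℝ) 1,
      ENNReal.ofReal (Real.exp (-(c * Real.exp (-gumbelT u)))) = ENNReal.ofReal (u ^ c) := by
    intro u hu
    rw [exp_neg_gumbelT hu, Real.rpow_def_of_pos hu.1]
    ring_nf
  rw [setLIntegral_congr_fun measurableSet_Ioo hcong]
  have hint : IntegrableOn (fun u : ℝ => u ^ c) (Set.Ioo 0 1) volume := by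
    apply Measure.integrableOn_of_bounded (M := 1)
    · simp [Real.volume_Ioo]
    · exact (measurable_id.pow_const c).aestronglyMeasurable
    · filter_upwards [ae_restrict_mem measurableSet_Ioo] with u hu
      rw [Real.norm_eq_abs, abs_of_nonneg (Real.rpow_nonneg hu.1.le c)]
      exact Real.rpow_le_one hu.1.le hu.2.le hc
  rw [← ofReal_integral_eq_lintegral_ofReal hint]
  · congr 1
    rw [← integral_Ioc_eq_integral_Ioo, ← intervalIntegral.integral_of_le zero_le_one,
      integral_rpow (Or.inl (by linarith))]
    rw [Real.one_rpow, Real.zero_rpow (by linarith)]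
    ring
  · filter_upwards [ae_restrict_mem measurableSet_Ioo] with u hu
    exact Real.rpow_nonneg hu.1.le c

/-- Gumbel-max trick: the argmax of Gumbel-perturbed scores is distributed according to
the softmax of the scores. -/
theorem stmt_9 {Ω : Type*} [MeasurableSpace Ω] (P : Measure Ω) [IsProbabilityMeasure P]
    (N : ℕ) (hN : 1 ≤ N) (s : Fin N → ℝ) (v : Fin N → Ω → ℝ)
    (hmeas : ∀ n, Measurable (v n))
    (hindep : ProbabilityTheory.iIndepFun v P)
    (hcdf : ∀ n (t : ℝ), P {ω | v n ω ≤ t} = ENNReal.ofReal (Real.exp (-Real.exp (-t)))) :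
    ∀ j : Fin N, P {ω | ∀ n, n ≠ j → s n + v n ω < s j + v j ω} =
      ENNReal.ofReal (Real.exp (s j) / ∑ m, Real.exp (s m)) := by
  obtain ⟨M, rfl⟩ : ∃ M, N = M + 1 := ⟨N - 1, (Nat.succ_pred_eq_of_pos hN).symm⟩
  intro j
  -- each v n has law gumbel
  have hlaw : ∀ n, P.map (v n) = gumbel := by
    intro n
    haveI : IsProbabilityMeasure (P.map (v n)) := Measure.isProbabilityMeasure_map (hmeas n).aemeasurable
    refine Measure.ext_of_Iic _ _ (fun a => ?_)
    rw [Measure.map_apply (hmeas n) measurableSet_Iic, gumbel_Iic]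
    exact hcdf n a
  -- joint law is the product measure
  have hjm : Measurable (fun ω n => v n ω) := measurable_pi_iff.mpr hmeas
  have hjoint : P.map (fun ω n => v n ω) = Measure.pi (fun _ : Fin (M+1) => gumbel) := by
    refine (Measure.pi_eq fun A hA => ?_).symm
    rw [Measure.map_apply hjm (MeasurableSet.univ_pi hA)]
    have hpre : (fun ω n => v n ω) ⁻¹' (Set.pi Set.univ A) = ⋂ n, v n ⁻¹' A n := by
      ext ω; simp [Set.mem_pi]
    rw [hpre]
    have := hindep.measure_inter_preimage_eq_mul Finset.univ (sets := A)
      (fun i _ => hA i)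
    rw [show (⋂ n, v n ⁻¹' A n) = ⋂ n ∈ Finset.univ, v n ⁻¹' A n by simp, this]
    exact Finset.prod_congr rfl fun n _ => by
      rw [← Measure.map_apply (hmeas n) (hA n), hlaw n]
  -- the event as a preimage
  set S : Set (Fin (M+1) → ℝ) := {x | ∀ n, n ≠ j → s n + x n < s j + x j} with hS
  have hSm : MeasurableSet S := by
    have : S = ⋂ n, ⋂ _h : n ≠ j, {x : Fin (M+1) → ℝ | s n + x n < s j + x j} := by
      ext x; simp [hS]
    rw [this]
    exact MeasurableSet.iInter fun n => MeasurableSet.iInter fun _ =>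
      measurableSet_lt (measurable_const.add (measurable_pi_apply n))
        (measurable_const.add (measurable_pi_apply j))
  have hEv : {ω | ∀ n, n ≠ j → s n + v n ω < s j + v j ω} = (fun ω n => v n ω) ⁻¹' S := rfl
  rw [hEv, ← Measure.map_apply hjm hSm, hjoint]
  -- split off coordinate j
  have hmp := (measurePreserving_piFinSuccAbove (fun _ : Fin (M+1) => gumbel) j).symm
  rw [← hmp.measure_preimage hSm.nullMeasurableSet]
  -- identify the preimage set
  set c : ℝ := ∑ k : Fin M, Real.exp (s (j.succAbove k) - s j) with hcdef
  have hc : 0 ≤ c := Finset.sum_nonneg fun k _ => (Real.exp_pos _).le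
  have hpre2 : (MeasurableEquiv.piFinSuccAbove (fun _ : Fin (M+1) => ℝ) j).symm ⁻¹' S
      = {q : ℝ × (Fin M → ℝ) | ∀ k, s (j.succAbove k) + q.2 k < s j + q.1} := by
    ext ⟨t, y⟩
    simp only [Set.mem_preimage, Set.mem_setOf_eq, hS,
      MeasurableEquiv.piFinSuccAbove_symm_apply]
    constructor
    · intro h k
      have := h (j.succAbove k) (Fin.succAbove_ne j k)
      simpa using this
    · intro h n hn
      rcases Fin.exists_succAbove_eq hn with ⟨k, rfl⟩
      simpa using h k
  rw [hpre2]
  rw [Measure.prod_apply]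
  swap
  · have : {q : ℝ × (Fin M → ℝ) | ∀ k, s (j.succAbove k) + q.2 k < s j + q.1}
        = ⋂ k, {q : ℝ × (Fin M → ℝ) | s (j.succAbove k) + q.2 k < s j + q.1} := by
      ext q; simp
    rw [this]
    exact MeasurableSet.iInter fun k =>
      measurableSet_lt (((measurable_pi_apply k).comp measurable_snd).const_add _)
        (measurable_fst.const_add _)
  -- compute the inner measure
  have hinner : ∀ t : ℝ, (Measure.pi fun _ : Fin M => gumbel)
      (Prod.mk t ⁻¹' {q : ℝ × (Fin M → ℝ) | ∀ k, s (j.succAbove k) + q.2 k < s j + q.1})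
      = ENNReal.ofReal (Real.exp (-(c * Real.exp (-t)))) := by
    intro t
    have : Prod.mk t ⁻¹' {q : ℝ × (Fin M → ℝ) | ∀ k, s (j.succAbove k) + q.2 k < s j + q.1}
        = Set.pi Set.univ (fun k => Set.Iio (s j + t - s (j.succAbove k))) := by
      ext y; simp only [Set.mem_preimage, Set.mem_setOf_eq, Set.mem_pi, Set.mem_univ,
        Set.mem_Iio, true_implies]
      exact forall_congr' fun k => by constructor <;> intro h <;> linarith
    rw [this, Measure.pi_pi]
    simp_rw [gumbel_Iio]
    rw [← ENNReal.ofReal_prod_of_nonneg (fun k _ => (Real.exp_pos _).le)]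
    congr 1
    rw [← Real.exp_sum]
    congr 1
    rw [hcdef, Finset.sum_mul, ← Finset.sum_neg_distrib]
    refine Finset.sum_congr rfl fun k _ => ?_
    rw [← Real.exp_add]
    congr 1
    ring
  simp_rw [hinner]
  rw [gumbel_integral hc]
  congr 1
  have hsum : ∑ m : Fin (M+1), Real.exp (s m)
      = Real.exp (s j) + ∑ k : Fin M, Real.exp (s (j.succAbove k)) :=
    Fin.sum_univ_succAbove _ j
  have hce : c * Real.exp (s j) = ∑ k : Fin M, Real.exp (s (j.succAbove k)) := by
    rw [hcdef, Finset.sum_mul]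
    refine Finset.sum_congr rfl fun k _ => ?_
    rw [← Real.exp_add]; congr 1; ring
  have hT : ∑ m : Fin (M+1), Real.exp (s m) = (c + 1) * Real.exp (s j) := by
    rw [hsum, ← hce]; ring
  rw [hT]
  have h1 : (0:ℝ) < c + 1 := by linarith
  field_simp
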